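/- Let k be a field, R = k[a, b, c, d, e], R' = k[a, b, c, d] ⊆ R, and let M₄ = R/((a − b)(e − b), c − d). Let M₄' be the R'-submodule of M₄ generated by the class of 1, and let M₄'' be the R-submodule of M₄ generated by the class of e − b, regarded as an R'-submodule by restriction of scalars. Then M₄ is the internal direct sum M₄ = M₄' ⊕ M₄'' of R'-submodules. -/

import Mathlib

open MvPolynomial Polynomial

set_option maxHeartbeats 1000000 in
set_option synthInstance.maxHeartbeats 400000 in
/-- In `R = k[a, b, c, d, e]`, realized as `(k[a, b, c, d])[e]`
(so `R' = k[a, b, c, d] = MvPolynomial (Fin 4) k` is the base ring,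
`a = C (X 0)`, `b = C (X 1)`, `c = C (X 2)`, `d = C (X 3)`, `e = Polynomial.X`),
let `M₄ = R/((a − b)(e − b), c − d)`.  Then `M₄` is the internal direct sum of the
`R'`-submodule generated by the class of `1` and the `R`-submodule generated by the
class of `e − b` (viewed as an `R'`-submodule by restriction of scalars). -/
theorem IIb_M4_decomposition (k : Type*) [Field k] :
    ∀ I : Ideal (Polynomial (MvPolynomial (Fin 4) k)),
      I = Ideal.span {(Polynomial.C (X 0) - Polynomial.C (X 1)) *
            (Polynomial.X - Polynomial.C (X 1)),
          Polynomial.C (X 2) - Polynomial.C (X 3)} →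
      (Submodule.span (MvPolynomial (Fin 4) k)
          {(1 : Polynomial (MvPolynomial (Fin 4) k) ⧸ I)} ⊔
        Submodule.restrictScalars (MvPolynomial (Fin 4) k)
          (Submodule.span (Polynomial (MvPolynomial (Fin 4) k))
            {Ideal.Quotient.mk I (Polynomial.X - Polynomial.C (X 1))}) = ⊤) ∧
      (Submodule.span (MvPolynomial (Fin 4) k)
          {(1 : Polynomial (MvPolynomial (Fin 4) k) ⧸ I)} ⊓
        Submodule.restrictScalars (MvPolynomial (Fin 4) k)
          (Submodule.span (Polynomial (MvPolynomial (Fin 4) k))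
            {Ideal.Quotient.mk I (Polynomial.X - Polynomial.C (X 1))}) = ⊥) := by
  intro I hI
  have hone : (1 : Polynomial (MvPolynomial (Fin 4) k) ⧸ I) = Ideal.Quotient.mk I 1 := rfl
  have hsmul' : ∀ (r : MvPolynomial (Fin 4) k),
      r • (1 : Polynomial (MvPolynomial (Fin 4) k) ⧸ I) =
        Ideal.Quotient.mk I (Polynomial.C r) := by
    intro r
    have h1 : (1 : Polynomial (MvPolynomial (Fin 4) k) ⧸ I) = Submodule.Quotient.mk 1 := rfl
    rw [h1, ← Submodule.Quotient.mk_smul]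
    congr 1
    simp [Algebra.smul_def, Polynomial.algebraMap_eq]
  have hsmul : ∀ (q z : Polynomial (MvPolynomial (Fin 4) k)),
      q • (Ideal.Quotient.mk I z) = Ideal.Quotient.mk I (q * z) := by
    intro q z
    have h1 : Ideal.Quotient.mk I z = Submodule.Quotient.mk z := rfl
    rw [h1, ← Submodule.Quotient.mk_smul]
    rfl
  constructor
  · rw [eq_top_iff]
    rintro x -
    obtain ⟨p, rfl⟩ := Ideal.Quotient.mk_surjective x
    have hm : (Polynomial.X - Polynomial.C (X 1) :
        Polynomial (MvPolynomial (Fin 4) k)).Monic := Polynomial.monic_X_sub_C _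
    have hdiv := Polynomial.modByMonic_add_div p (Polynomial.X - Polynomial.C (X 1))
    rw [Polynomial.modByMonic_X_sub_C_eq_C_eval] at hdiv
    rw [← hdiv, map_add]
    apply Submodule.add_mem_sup
    · rw [← hsmul']
      exact Submodule.smul_mem _ _ (Submodule.mem_span_singleton_self _)
    · rw [Submodule.restrictScalars_mem]
      refine Submodule.mem_span_singleton.mpr
        ⟨p /ₘ (Polynomial.X - Polynomial.C (X 1)), ?_⟩
      rw [hsmul, mul_comm]
  · rw [eq_bot_iff]
    rintro x ⟨hx1, hx2⟩
    rw [Submodule.mem_bot]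
    obtain ⟨r, hrx⟩ := Submodule.mem_span_singleton.mp hx1
    obtain ⟨f, hfx⟩ := Submodule.mem_span_singleton.mp
      ((Submodule.restrictScalars_mem _ _ _).mp hx2)
    rw [hsmul'] at hrx
    rw [hsmul] at hfx
    have hmem : Polynomial.C r - f * (Polynomial.X - Polynomial.C (X 1)) ∈ I := by
      rw [← Ideal.Quotient.eq_zero_iff_mem, map_sub, hrx, hfx, sub_self]
    rw [hI, Ideal.mem_span_pair] at hmem
    obtain ⟨u, v, huv⟩ := hmem
    have hev := congrArg (Polynomial.eval (X 1 : MvPolynomial (Fin 4) k)) huv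
    simp only [Polynomial.eval_add, Polynomial.eval_mul, Polynomial.eval_sub,
      Polynomial.eval_X, Polynomial.eval_C, sub_self, mul_zero, zero_mul,
      add_zero, zero_add, sub_zero] at hev
    have hrI : (Polynomial.C r : Polynomial (MvPolynomial (Fin 4) k)) ∈ I := by
      have hcd : (Polynomial.C (X 2) - Polynomial.C (X 3) :
          Polynomial (MvPolynomial (Fin 4) k)) ∈ I := by
        rw [hI]
        exact Ideal.subset_span (Set.mem_insert_of_mem _ rfl)
      have h2 := Ideal.mul_mem_left _
        (Polynomial.C (Polynomial.eval (X 1 : MvPolynomial (Fin 4) k) v)) hcd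
      have h3 : (Polynomial.C (Polynomial.eval (X 1 : MvPolynomial (Fin 4) k) v)) *
          (Polynomial.C (X 2) - Polynomial.C (X 3)) = Polynomial.C r := by
        rw [mul_sub, ← Polynomial.C_mul, ← Polynomial.C_mul, ← Polynomial.C_sub, ← mul_sub]
        exact congrArg Polynomial.C hev
      rwa [h3] at h2
    rw [← hrx, Ideal.Quotient.eq_zero_iff_mem]
    exact hrI
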